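/- Let (X_n)_{n∈ℤ} be a stationary integer-valued sequence with E[|X_0|] < ∞. If almost surely R_X^{n+1}(0) > R_X^n(0) for all n ≥ 0 (0 has infinitely many ancestors in the record graph), then almost surely for all i, j ∈ ℤ there exist n, m ≥ 0 with R_X^n(i) = R_X^m(j) (the record graph is connected). -/
import Mathlib


attribute [local instance] Classical.propDecidable

/-- The record map of an integer sequence: `n` is sent to the least integer `j > n`
with `∑_{l=n}^{j-1} x l ≥ 0` if such `j` exists, and to `n` otherwise. -/
noncomputable def recordMap (x : ℤ → ℤ) (n : ℤ) : ℤ :=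
  if ∃ j : ℤ, n < j ∧ 0 ≤ ∑ l ∈ Finset.Ico n j, x l then
    sInf {j : ℤ | n < j ∧ 0 ≤ ∑ l ∈ Finset.Ico n j, x l}
  else n

namespace RecordAux

/-- The set of record candidates. -/
def recSet (x : ℤ → ℤ) (n : ℤ) : Set ℤ := {j : ℤ | n < j ∧ 0 ≤ ∑ l ∈ Finset.Ico n j, x l}

lemma recSet_bddBelow (x : ℤ → ℤ) (n : ℤ) : BddBelow (recSet x n) :=
  ⟨n, fun _ hj => hj.1.le⟩

lemma recordMap_of_nonempty {x : ℤ → ℤ} {n : ℤ} (h : (recSet x n).Nonempty) :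
    recordMap x n = sInf (recSet x n) := by
  unfold recordMap
  exact if_pos h

lemma recordMap_of_empty {x : ℤ → ℤ} {n : ℤ} (h : ¬ (recSet x n).Nonempty) :
    recordMap x n = n := by
  unfold recordMap
  exact if_neg h

lemma recordMap_mem {x : ℤ → ℤ} {n : ℤ} (h : (recSet x n).Nonempty) :
    recordMap x n ∈ recSet x n := by
  rw [recordMap_of_nonempty h]
  exact Int.csInf_mem h (recSet_bddBelow x n)

lemma recordMap_le {x : ℤ → ℤ} {n j : ℤ} (h : j ∈ recSet x n) :
    recordMap x n ≤ j := by
  rw [recordMap_of_nonempty ⟨j, h⟩]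
  exact csInf_le (recSet_bddBelow x n) h

lemma le_recordMap (x : ℤ → ℤ) (n : ℤ) : n ≤ recordMap x n := by
  by_cases h : (recSet x n).Nonempty
  · exact (recordMap_mem h).1.le
  · rw [recordMap_of_empty h]

lemma nonempty_of_lt_recordMap {x : ℤ → ℤ} {n : ℤ} (h : n < recordMap x n) :
    (recSet x n).Nonempty := by
  by_contra hne
  rw [recordMap_of_empty hne] at h
  exact lt_irrefl _ h

/-- Key monotonicity: if `i ≤ p < recordMap x i` then `recordMap x p ≤ recordMap x i`. -/
lemma recordMap_le_recordMap {x : ℤ → ℤ} {i p : ℤ} (hip : i ≤ p)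
    (hpr : p < recordMap x i) : recordMap x p ≤ recordMap x i := by
  have hne : (recSet x i).Nonempty := nonempty_of_lt_recordMap (lt_of_le_of_lt hip hpr)
  have hmem := recordMap_mem hne
  set r := recordMap x i with hr
  rcases eq_or_lt_of_le hip with rfl | hlt
  · exact le_refl _
  · -- i < p < r, so p ∉ recSet x i, i.e. the sum from i to p is negative
    have hps : p ∉ recSet x i := fun hp => absurd (recordMap_le hp) (not_le.mpr hpr)
    have hsum_neg : ∑ l ∈ Finset.Ico i p, x l < 0 := by
      by_contra hc
      exact hps ⟨hlt, not_lt.mp hc⟩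
    have hsplit : ∑ l ∈ Finset.Ico i p, x l + ∑ l ∈ Finset.Ico p r, x l
        = ∑ l ∈ Finset.Ico i r, x l := by
      rw [← Finset.sum_union (Finset.Ico_disjoint_Ico_consecutive i p r),
        Finset.Ico_union_Ico_eq_Ico hip (le_of_lt hpr)]
    have : 0 ≤ ∑ l ∈ Finset.Ico p r, x l := by
      have h1 : 0 ≤ ∑ l ∈ Finset.Ico i r, x l := hmem.2
      omega
    exact recordMap_le ⟨hpr, this⟩

/-- Growth of iterates under the strict-increase hypothesis. -/
lemma iterate_growth {x : ℤ → ℤ} {k : ℤ}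
    (H : ∀ n : ℕ, (recordMap x)^[n] k < (recordMap x)^[n + 1] k) :
    ∀ n : ℕ, k + n ≤ (recordMap x)^[n] k := by
  intro n
  induction n with
  | zero => simp
  | succ n ih =>
    have := H n
    push_cast
    omega

lemma le_iterate {x : ℤ → ℤ} {k : ℤ}
    (H : ∀ n : ℕ, (recordMap x)^[n] k < (recordMap x)^[n + 1] k) (n : ℕ) :
    k ≤ (recordMap x)^[n] k := by
  have := iterate_growth H n
  omega

/-- Merging lemma: if `i ≤ j < recordMap x i` and the trajectory of `j` is strictly
increasing, then the trajectory of `j` hits `recordMap x i`. -/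
lemma merge_step {x : ℤ → ℤ} {i j : ℤ}
    (Hj : ∀ n : ℕ, (recordMap x)^[n] j < (recordMap x)^[n + 1] j)
    (hij : i ≤ j) (hjr : j < recordMap x i) :
    ∃ m : ℕ, (recordMap x)^[m] j = recordMap x i := by
  classical
  have hex : ∃ m : ℕ, recordMap x i ≤ (recordMap x)^[m] j := by
    refine ⟨(recordMap x i - j).toNat, ?_⟩
    have := iterate_growth Hj (recordMap x i - j).toNat
    omega
  obtain ⟨m', hm'⟩ : ∃ m', Nat.find hex = m' + 1 := by
    have h0 : Nat.find hex ≠ 0 := by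
      intro h0
      have hspec := Nat.find_spec hex
      rw [h0] at hspec
      simp only [Function.iterate_zero_apply] at hspec
      omega
    exact ⟨Nat.find hex - 1, by omega⟩
  have hm : recordMap x i ≤ (recordMap x)^[m' + 1] j := hm' ▸ Nat.find_spec hex
  have hlt : (recordMap x)^[m'] j < recordMap x i := by
    have := Nat.find_min hex (m := m') (by omega)
    omega
  have hip : i ≤ (recordMap x)^[m'] j := le_trans hij (le_iterate Hj m')
  have hle := recordMap_le_recordMap hip hlt
  refine ⟨m' + 1, ?_⟩
  rw [Function.iterate_succ_apply']
  rw [Function.iterate_succ_apply'] at hm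
  omega

/-- Connectivity from one-sided merging. -/
lemma connected_of_le {x : ℤ → ℤ}
    (H : ∀ k : ℤ, ∀ n : ℕ, (recordMap x)^[n] k < (recordMap x)^[n + 1] k)
    {i j : ℤ} (hij : i ≤ j) :
    ∃ n m : ℕ, (recordMap x)^[n] i = (recordMap x)^[m] j := by
  classical
  have hex : ∃ n : ℕ, j < (recordMap x)^[n] i := by
    refine ⟨(j + 1 - i).toNat, ?_⟩
    have := iterate_growth (H i) (j + 1 - i).toNat
    omega
  obtain ⟨n', hn'⟩ : ∃ n', Nat.find hex = n' + 1 := by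
    have h0 : Nat.find hex ≠ 0 := by
      intro h0
      have hspec := Nat.find_spec hex
      rw [h0] at hspec
      simp only [Function.iterate_zero_apply] at hspec
      omega
    exact ⟨Nat.find hex - 1, by omega⟩
  have hn : j < (recordMap x)^[n' + 1] i := hn' ▸ Nat.find_spec hex
  have hple : (recordMap x)^[n'] i ≤ j := by
    have := Nat.find_min hex (m := n') (by omega)
    omega
  have hsucc : (recordMap x)^[n' + 1] i = recordMap x ((recordMap x)^[n'] i) :=
    Function.iterate_succ_apply' _ _ _
  have hjr : j < recordMap x ((recordMap x)^[n'] i) := by rw [← hsucc]; exact hn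
  obtain ⟨m, hmeq⟩ := merge_step (H j) hple hjr
  exact ⟨n' + 1, m, by rw [hsucc, hmeq]⟩

/-- Deterministic main lemma. -/
lemma connected {x : ℤ → ℤ}
    (H : ∀ k : ℤ, ∀ n : ℕ, (recordMap x)^[n] k < (recordMap x)^[n + 1] k)
    (i j : ℤ) :
    ∃ n m : ℕ, (recordMap x)^[n] i = (recordMap x)^[m] j := by
  rcases le_total i j with h | h
  · exact connected_of_le H h
  · obtain ⟨n, m, hnm⟩ := connected_of_le H h
    exact ⟨m, n, hnm.symm⟩

/-- Shift equivariance of the record map. -/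
lemma recordMap_shift (x : ℤ → ℤ) (k n : ℤ) :
    recordMap (fun l => x (l + k)) n = recordMap x (n + k) - k := by
  have hsum : ∀ a b : ℤ, ∑ l ∈ Finset.Ico a b, x (l + k)
      = ∑ l ∈ Finset.Ico (a + k) (b + k), x l := by
    intro a b
    rw [← Finset.map_add_right_Ico, Finset.sum_map]
    rfl
  have hmem : ∀ j : ℤ, j ∈ recSet (fun l => x (l + k)) n ↔ j + k ∈ recSet x (n + k) := by
    intro j
    simp only [recSet, Set.mem_setOf_eq, hsum]
    constructor
    · rintro ⟨h1, h2⟩; exact ⟨by omega, h2⟩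
    · rintro ⟨h1, h2⟩; exact ⟨by omega, h2⟩
  by_cases h : (recSet (fun l => x (l + k)) n).Nonempty
  · have h' : (recSet x (n + k)).Nonempty := by
      obtain ⟨j, hj⟩ := h
      exact ⟨j + k, (hmem j).mp hj⟩
    have h1 : recordMap (fun l => x (l + k)) n ≤ recordMap x (n + k) - k := by
      apply recordMap_le
      rw [hmem]
      have := recordMap_mem h'
      simpa using this
    have h2 : recordMap x (n + k) ≤ recordMap (fun l => x (l + k)) n + k := by
      apply recordMap_le
      rw [← hmem]
      exact recordMap_mem h
    omega
  · have h' : ¬ (recSet x (n + k)).Nonempty := by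
      rintro ⟨j, hj⟩
      exact h ⟨j - k, (hmem (j - k)).mpr (by simpa using hj)⟩
    rw [recordMap_of_empty h, recordMap_of_empty h']
    omega

lemma recordMap_shift_iter (x : ℤ → ℤ) (k : ℤ) (m : ℕ) (n : ℤ) :
    (recordMap (fun l => x (l + k)))^[m] n = (recordMap x)^[m] (n + k) - k := by
  induction m generalizing n with
  | zero => simp
  | succ m ih =>
    rw [Function.iterate_succ_apply', Function.iterate_succ_apply', ih,
      recordMap_shift]
    congr 1
    congr 1
    omega

/-! ### Measurability -/

lemma measurable_sum_Ico (a b : ℤ) :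
    Measurable (fun x : ℤ → ℤ => ∑ l ∈ Finset.Ico a b, x l) :=
  Finset.measurable_sum _ fun l _ => measurable_pi_apply l

lemma measurableSet_B (a b : ℤ) :
    MeasurableSet {x : ℤ → ℤ | 0 ≤ ∑ l ∈ Finset.Ico a b, x l} :=
  measurable_sum_Ico a b ((Set.to_countable {t : ℤ | 0 ≤ t}).measurableSet)

lemma measurable_recordMap_apply (z : ℤ) :
    Measurable (fun x : ℤ → ℤ => recordMap x z) := by
  apply measurable_to_countable'
  intro y
  rcases lt_trichotomy z y with hzy | rfl | hyz
  · have heq : (fun x : ℤ → ℤ => recordMap x z) ⁻¹' {y}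
        = {x : ℤ → ℤ | 0 ≤ ∑ l ∈ Finset.Ico z y, x l}
          ∩ ⋂ (j : ℤ) (_ : z < j) (_ : j < y),
            {x : ℤ → ℤ | 0 ≤ ∑ l ∈ Finset.Ico z j, x l}ᶜ := by
      ext x
      simp only [Set.mem_preimage, Set.mem_singleton_iff, Set.mem_inter_iff,
        Set.mem_iInter, Set.mem_setOf_eq, Set.mem_compl_iff]
      constructor
      · intro hx
        have hne : (recSet x z).Nonempty := nonempty_of_lt_recordMap (hx ▸ hzy)
        have hmem := recordMap_mem hne
        rw [hx] at hmem
        refine ⟨hmem.2, fun j hzj hjy hj => ?_⟩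
        have := recordMap_le (x := x) (n := z) ⟨hzj, hj⟩
        omega
      · rintro ⟨h1, h2⟩
        have hy : y ∈ recSet x z := ⟨hzy, h1⟩
        have hle := recordMap_le hy
        have hmem := recordMap_mem ⟨y, hy⟩
        rcases eq_or_lt_of_le hle with h | h
        · exact h
        · exact absurd hmem.2 (h2 _ hmem.1 h)
    rw [heq]
    exact (measurableSet_B z y).inter
      (MeasurableSet.iInter fun j => MeasurableSet.iInter fun _ =>
        MeasurableSet.iInter fun _ => (measurableSet_B z j).compl)
  · have heq : (fun x : ℤ → ℤ => recordMap x z) ⁻¹' {z}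
        = ⋂ (j : ℤ) (_ : z < j), {x : ℤ → ℤ | 0 ≤ ∑ l ∈ Finset.Ico z j, x l}ᶜ := by
      ext x
      simp only [Set.mem_preimage, Set.mem_singleton_iff, Set.mem_iInter,
        Set.mem_setOf_eq, Set.mem_compl_iff]
      constructor
      · intro hx j hzj hj
        have hmem := recordMap_mem (x := x) (n := z) ⟨j, hzj, hj⟩
        rw [hx] at hmem
        exact lt_irrefl _ hmem.1
      · intro h
        apply recordMap_of_empty
        rintro ⟨j, hzj, hj⟩
        exact h j hzj hj
    rw [heq]
    exact MeasurableSet.iInter fun j => MeasurableSet.iInter fun _ =>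
      (measurableSet_B z j).compl
  · have heq : (fun x : ℤ → ℤ => recordMap x z) ⁻¹' {y} = ∅ := by
      ext x
      simp only [Set.mem_preimage, Set.mem_singleton_iff, Set.mem_empty_iff_false,
        iff_false]
      intro hx
      have := le_recordMap x z
      omega
    rw [heq]
    exact MeasurableSet.empty

lemma measurable_recordMap_iter (n : ℕ) (k : ℤ) :
    Measurable (fun x : ℤ → ℤ => (recordMap x)^[n] k) := by
  induction n with
  | zero => simp only [Function.iterate_zero_apply]; exact measurable_const
  | succ n ih =>
    apply measurable_to_countable'
    intro y
    have heq : (fun x : ℤ → ℤ => (recordMap x)^[n + 1] k) ⁻¹' {y}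
        = ⋃ z : ℤ, ((fun x : ℤ → ℤ => (recordMap x)^[n] k) ⁻¹' {z}
            ∩ (fun x : ℤ → ℤ => recordMap x z) ⁻¹' {y}) := by
      ext x
      simp only [Set.mem_preimage, Set.mem_singleton_iff, Set.mem_iUnion,
        Set.mem_inter_iff]
      rw [Function.iterate_succ_apply']
      constructor
      · intro hx
        exact ⟨(recordMap x)^[n] k, rfl, hx⟩
      · rintro ⟨z, hz, hzy⟩
        rw [hz]
        exact hzy
    rw [heq]
    exact MeasurableSet.iUnion fun z =>
      (ih (MeasurableSet.singleton z)).inter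
        ((measurable_recordMap_apply z) (MeasurableSet.singleton y))

lemma measurableSet_S :
    MeasurableSet {x : ℤ → ℤ | ∀ n : ℕ,
      (recordMap x)^[n] 0 < (recordMap x)^[n + 1] 0} := by
  have : {x : ℤ → ℤ | ∀ n : ℕ, (recordMap x)^[n] 0 < (recordMap x)^[n + 1] 0}
      = ⋂ n : ℕ, (fun x : ℤ → ℤ =>
          ((recordMap x)^[n] 0, (recordMap x)^[n + 1] 0)) ⁻¹' {p : ℤ × ℤ | p.1 < p.2} := by
    ext x
    simp [Set.mem_iInter]
  rw [this]
  exact MeasurableSet.iInter fun n =>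
    ((measurable_recordMap_iter n 0).prodMk (measurable_recordMap_iter (n + 1) 0))
      ((Set.to_countable {p : ℤ × ℤ | p.1 < p.2}).measurableSet)

end RecordAux

open MeasureTheory ProbabilityTheory

/-- For a stationary integrable integer sequence: if almost surely `0` has infinitely
many ancestors in the record graph, then almost surely the record graph is connected. -/
theorem stationary_record_graph_connected
    {Ω : Type*} [MeasureSpace Ω] [IsProbabilityMeasure (ℙ : Measure Ω)]
    (X : ℤ → Ω → ℤ) (hmeas : ∀ n, Measurable (X n))
    (hstat : ∀ k : ℤ, Measure.map (fun ω => fun n : ℤ => X (n + k) ω) ℙ =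
      Measure.map (fun ω => fun n : ℤ => X n ω) ℙ)
    (hint : Integrable (fun ω => (X 0 ω : ℝ)) ℙ)
    (hanc : ∀ᵐ ω ∂ℙ, ∀ n : ℕ,
      (recordMap (fun l => X l ω))^[n] 0 < (recordMap (fun l => X l ω))^[n + 1] 0) :
    ∀ᵐ ω ∂ℙ, ∀ i j : ℤ, ∃ n m : ℕ,
      (recordMap (fun l => X l ω))^[n] i = (recordMap (fun l => X l ω))^[m] j := by
  classical
  set S : Set (ℤ → ℤ) := {x : ℤ → ℤ | ∀ n : ℕ,
      (recordMap x)^[n] 0 < (recordMap x)^[n + 1] 0} with hS_def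
  have hS : MeasurableSet S := RecordAux.measurableSet_S
  set G : Ω → (ℤ → ℤ) := fun ω => fun n : ℤ => X n ω with hG_def
  have hG : Measurable G := measurable_pi_lambda _ fun n => hmeas n
  have hGk : ∀ k : ℤ, Measurable (fun ω => fun n : ℤ => X (n + k) ω) :=
    fun k => measurable_pi_lambda _ fun n => hmeas (n + k)
  -- a.e. ω, G ω ∈ S
  have h0 : ∀ᵐ ω ∂ℙ, G ω ∈ S := hanc
  -- for each k, a.e. ω, the shifted sequence is in S
  have hk : ∀ k : ℤ, ∀ᵐ ω ∂ℙ, (fun n : ℤ => X (n + k) ω) ∈ S := by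
    intro k
    have h1 : ℙ {ω | ¬ G ω ∈ S} = 0 := ae_iff.mp h0
    have h1' : ℙ (G ⁻¹' Sᶜ) = 0 := h1
    have h2 : ℙ ((fun ω => fun n : ℤ => X (n + k) ω) ⁻¹' Sᶜ) = 0 := by
      have hmap := Measure.map_apply (μ := ℙ) (hGk k) hS.compl
      rw [← hmap, hstat k, Measure.map_apply (μ := ℙ) hG hS.compl]
      exact h1'
    rw [ae_iff]
    exact h2
  have hall : ∀ᵐ ω ∂ℙ, ∀ k : ℤ, (fun n : ℤ => X (n + k) ω) ∈ S :=
    (ae_all_iff).mpr hk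
  filter_upwards [hall] with ω hω i j
  apply RecordAux.connected
  intro k n
  have hωk : (recordMap fun l : ℤ => X (l + k) ω)^[n] 0
      < (recordMap fun l : ℤ => X (l + k) ω)^[n + 1] 0 := hω k n
  have e1 : (recordMap fun l : ℤ => X (l + k) ω)^[n] 0
      = (recordMap fun l : ℤ => X l ω)^[n] (0 + k) - k :=
    RecordAux.recordMap_shift_iter (fun l => X l ω) k n 0
  have e2 : (recordMap fun l : ℤ => X (l + k) ω)^[n + 1] 0
      = (recordMap fun l : ℤ => X l ω)^[n + 1] (0 + k) - k :=
    RecordAux.recordMap_shift_iter (fun l => X l ω) k (n + 1) 0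
  simp only [zero_add] at e1 e2
  omega
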